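/- Let f : 2^{[n]} → ℝ be supermodular and normalized, and suppose R is a vertex (extreme point) of the contra-polymatroid P(f) = {R : ∑_{i∈B} R_i ≥ f(B) ∀ nonempty B} lying on the face ∑_{i=1}^n R_i = f([n]). Then there is a permutation π of [n] such that R is the greedy vector along π, i.e., R_{π(i)} = f({π(1),…,π(i)}) − f({π(1),…,π(i−1)}) for all i. -/

import Mathlib

open Finset

theorem extreme_point_of_base_is_greedy
    (n : ℕ) (f : Finset (Fin n) → ℝ) (R : Fin n → ℝ)
    (hnorm : f ∅ = 0)
    (hsuper : ∀ A B : Finset (Fin n), f A + f B ≤ f (A ∪ B) + f (A ∩ B))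
    (hfeas : ∀ B : Finset (Fin n), B.Nonempty → f B ≤ ∑ i ∈ B, R i)
    (hsum : ∑ i, R i = f Finset.univ)
    (hext : ∀ R₁ R₂ : Fin n → ℝ,
      ((∀ B : Finset (Fin n), B.Nonempty → f B ≤ ∑ i ∈ B, R₁ i) ∧
        ∑ i, R₁ i = f Finset.univ) →
      ((∀ B : Finset (Fin n), B.Nonempty → f B ≤ ∑ i ∈ B, R₂ i) ∧
        ∑ i, R₂ i = f Finset.univ) →
      R = (fun i => (R₁ i + R₂ i) / 2) → R₁ = R₂) :
    ∃ π : Equiv.Perm (Fin n), ∀ i : Fin n,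
      R (π i) = f ((Finset.univ.filter (fun k => k ≤ i)).image π)
        - f ((Finset.univ.filter (fun k => k < i)).image π) := by
  classical
  set Tight : Finset (Fin n) → Prop := fun B => ∑ k ∈ B, R k = f B with hTdef
  have hfeas' : ∀ B : Finset (Fin n), f B ≤ ∑ k ∈ B, R k := by
    intro B
    rcases B.eq_empty_or_nonempty with h | h
    · simp [h, hnorm]
    · exact hfeas B h
  have tight_empty : Tight ∅ := by simp [hTdef, hnorm]
  have tight_univ : Tight univ := hsum
  have tight_lattice : ∀ A B, Tight A → Tight B → Tight (A ∪ B) ∧ Tight (A ∩ B) := by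
    intro A B hA hB
    have hs : ∑ k ∈ A ∪ B, R k + ∑ k ∈ A ∩ B, R k = ∑ k ∈ A, R k + ∑ k ∈ B, R k :=
      Finset.sum_union_inter
    have h1 := hfeas' (A ∪ B)
    have h2 := hfeas' (A ∩ B)
    have h3 := hsuper A B
    simp only [hTdef] at hA hB ⊢
    constructor <;> linarith
  -- separation by tight sets
  have sep : ∀ i j : Fin n, i ≠ j →
      ∃ T, Tight T ∧ ((i ∈ T ∧ j ∉ T) ∨ (j ∈ T ∧ i ∉ T)) := by
    intro i j hij
    by_contra hcon
    push_neg at hcon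
    set S : Finset (Finset (Fin n)) :=
      univ.filter (fun B => (i ∈ B ∧ j ∉ B) ∨ (j ∈ B ∧ i ∉ B)) with hSdef
    have hSne : S.Nonempty := by
      refine ⟨{i}, ?_⟩
      simp [hSdef, Finset.notMem_singleton, (Ne.symm hij)]
    have hpos : ∀ B ∈ S, 0 < ∑ k ∈ B, R k - f B := by
      intro B hB
      simp only [hSdef, mem_filter, mem_univ, true_and] at hB
      have hBne : B.Nonempty := by
        rcases hB with ⟨h, _⟩ | ⟨h, _⟩ <;> exact ⟨_, h⟩
      have h1 := hfeas B hBne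
      have h2 : ¬ Tight B := by
        intro ht
        rcases hB with ⟨h3, h4⟩ | ⟨h3, h4⟩
        · exact h4 ((hcon B ht).1 h3)
        · exact h4 ((hcon B ht).2 h3)
      have h3 : f B ≠ ∑ k ∈ B, R k := fun h => h2 h.symm
      have := lt_of_le_of_ne h1 h3
      linarith
    set δ : ℝ := S.inf' hSne (fun B => ∑ k ∈ B, R k - f B) with hδdef
    have hδpos : 0 < δ := (Finset.lt_inf'_iff hSne).mpr hpos
    have hδle : ∀ B ∈ S, δ ≤ ∑ k ∈ B, R k - f B := fun B hB => Finset.inf'_le _ hB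
    set R₁ : Fin n → ℝ :=
      fun k => R k + (if k = i then δ else 0) - (if k = j then δ else 0) with hR₁
    set R₂ : Fin n → ℝ :=
      fun k => R k - (if k = i then δ else 0) + (if k = j then δ else 0) with hR₂
    have hsum1 : ∀ (B : Finset (Fin n)),
        ∑ k ∈ B, R₁ k = ∑ k ∈ B, R k + (if i ∈ B then δ else 0) - (if j ∈ B then δ else 0) := by
      intro B
      simp only [hR₁]
      rw [Finset.sum_sub_distrib, Finset.sum_add_distrib,
        Finset.sum_ite_eq' B i (fun _ => δ), Finset.sum_ite_eq' B j (fun _ => δ)]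
    have hsum2 : ∀ (B : Finset (Fin n)),
        ∑ k ∈ B, R₂ k = ∑ k ∈ B, R k - (if i ∈ B then δ else 0) + (if j ∈ B then δ else 0) := by
      intro B
      simp only [hR₂]
      rw [Finset.sum_add_distrib, Finset.sum_sub_distrib,
        Finset.sum_ite_eq' B i (fun _ => δ), Finset.sum_ite_eq' B j (fun _ => δ)]
    have hfeas1 : ∀ B : Finset (Fin n), B.Nonempty → f B ≤ ∑ k ∈ B, R₁ k := by
      intro B hB
      rw [hsum1 B]
      have h1 := hfeas B hB
      by_cases hi : i ∈ B <;> by_cases hj : j ∈ B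
      · simp [hi, hj]; linarith
      · have := hδle B (by simp [hSdef, hi, hj])
        simp [hi, hj]; linarith
      · have := hδle B (by simp [hSdef, hi, hj])
        simp [hi, hj]; linarith
      · simp [hi, hj]; linarith
    have hfeas2 : ∀ B : Finset (Fin n), B.Nonempty → f B ≤ ∑ k ∈ B, R₂ k := by
      intro B hB
      rw [hsum2 B]
      have h1 := hfeas B hB
      by_cases hi : i ∈ B <;> by_cases hj : j ∈ B
      · simp [hi, hj]; linarith
      · have := hδle B (by simp [hSdef, hi, hj])
        simp [hi, hj]; linarith
      · have := hδle B (by simp [hSdef, hi, hj])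
        simp [hi, hj]; linarith
      · simp [hi, hj]; linarith
    have htot1 : ∑ k, R₁ k = f univ := by
      rw [hsum1 univ]; simp [hsum]
    have htot2 : ∑ k, R₂ k = f univ := by
      rw [hsum2 univ]; simp [hsum]
    have hmid : R = fun k => (R₁ k + R₂ k) / 2 := by
      funext k; simp only [hR₁, hR₂]; ring
    have heq := hext R₁ R₂ ⟨hfeas1, htot1⟩ ⟨hfeas2, htot2⟩ hmid
    have := congrFun heq i
    simp only [hR₁, hR₂, if_pos rfl, if_neg hij, ite_true] at this
    linarith
  -- minimal tight set containing i
  set F : Fin n → Finset (Finset (Fin n)) :=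
    fun i => (univ : Finset (Finset (Fin n))).filter (fun T => Tight T ∧ i ∈ T) with hFdef
  set D : Fin n → Finset (Fin n) := fun i => (F i).inf id with hDdef
  have tight_D : ∀ i, Tight (D i) := by
    intro i
    show Tight ((F i).inf id)
    refine Finset.inf_induction tight_univ ?_ ?_
    · intro A hA B hB
      exact (tight_lattice A B hA hB).2
    · intro T hT
      simp only [hFdef, mem_filter] at hT
      exact hT.2.1
  have mem_D : ∀ i, i ∈ D i := by
    intro i
    have h : ({i} : Finset (Fin n)) ≤ (F i).inf id := by
      refine Finset.le_inf ?_
      intro T hT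
      simp only [hFdef, mem_filter] at hT
      exact Finset.singleton_subset_iff.mpr hT.2.2
    exact Finset.singleton_subset_iff.mp h
  have D_subset : ∀ i T, Tight T → i ∈ T → D i ⊆ T := by
    intro i T hT hiT
    have hTmem : T ∈ F i := by
      simp only [hFdef, mem_filter]
      exact ⟨mem_univ T, hT, hiT⟩
    have h : (F i).inf id ≤ id T := Finset.inf_le hTmem
    exact h
  have D_mono : ∀ i j, j ∈ D i → D j ⊆ D i := by
    intro i j hj
    have h : D j ≤ (F i).inf id := by
      refine Finset.le_inf ?_
      intro T hT
      simp only [hFdef, mem_filter, mem_univ, true_and] at hT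
      have hjT : j ∈ T := D_subset i T hT.1 hT.2 hj
      exact D_subset j T hT.1 hjT
    exact h
  have D_inj : Function.Injective D := by
    intro i j hij
    by_contra hne
    obtain ⟨T, hT, hcase⟩ := sep i j hne
    rcases hcase with ⟨hi, hj⟩ | ⟨hj, hi⟩
    · have : j ∈ T := (D_subset i T hT hi) (hij ▸ mem_D j)
      exact hj this
    · have : i ∈ T := (D_subset j T hT hj) (hij.symm ▸ mem_D i)
      exact hi this
  -- sort by card of D
  set g : Fin n → ℕ := fun i => (D i).card with hgdef
  set π : Equiv.Perm (Fin n) := Tuple.sort g with hπdef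
  have hmono : Monotone (g ∘ π) := Tuple.monotone_sort g
  -- prefix sets are tight
  have prefix_tight : ∀ s : Finset (Fin n),
      (∀ k l : Fin n, l ≤ k → k ∈ s → l ∈ s) → Tight (s.image π) := by
    intro s hdown
    have key : s.image π = s.sup (fun k => D (π k)) := by
      apply Finset.Subset.antisymm
      · intro m hm
        simp only [mem_image] at hm
        obtain ⟨k, hk, rfl⟩ := hm
        exact Finset.le_sup (f := fun k => D (π k)) hk (mem_D (π k))
      · intro m hm
        rw [Finset.mem_sup] at hm
        obtain ⟨k, hk, hmk⟩ := hm
        by_cases hmeq : m = π k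
        · subst hmeq
          exact mem_image_of_mem π hk
        · have hsub : D m ⊆ D (π k) := D_mono (π k) m hmk
          have hss : D m ⊂ D (π k) := hsub.ssubset_of_ne (fun h => hmeq (D_inj h))
          have hcard : (D m).card < (D (π k)).card := Finset.card_lt_card hss
          have hle : π.symm m ≤ k := by
            by_contra hlt
            push_neg at hlt
            have := hmono hlt.le
            simp only [Function.comp_apply, hgdef] at this
            rw [Equiv.apply_symm_apply] at this
            omega
          have : π.symm m ∈ s := hdown k (π.symm m) hle hk
          have := mem_image_of_mem π this
          rwa [Equiv.apply_symm_apply] at this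
    rw [key]
    refine Finset.sup_induction tight_empty ?_ ?_
    · intro A hA B hB
      exact (tight_lattice A B hA hB).1
    · intro k _
      exact tight_D (π k)
  refine ⟨π, ?_⟩
  intro i
  have hA : Tight ((univ.filter (fun k => k ≤ i)).image π) := by
    apply prefix_tight
    intro k l hlk hk
    simp only [mem_filter, mem_univ, true_and] at hk ⊢
    exact le_trans hlk hk
  have hB : Tight ((univ.filter (fun k => k < i)).image π) := by
    apply prefix_tight
    intro k l hlk hk
    simp only [mem_filter, mem_univ, true_and] at hk ⊢
    exact lt_of_le_of_lt hlk hk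
  have hsplit : (univ.filter (fun k => k ≤ i)) = insert i (univ.filter (fun k => k < i)) := by
    ext k
    simp [mem_filter, mem_insert, le_iff_lt_or_eq, or_comm]
  have himg : (univ.filter (fun k => k ≤ i)).image π
      = insert (π i) ((univ.filter (fun k => k < i)).image π) := by
    rw [hsplit, Finset.image_insert]
  have hnotmem : π i ∉ (univ.filter (fun k => k < i)).image π := by
    simp only [mem_image, mem_filter, mem_univ, true_and]
    rintro ⟨k, hk, hkeq⟩
    have : k = i := π.injective hkeq
    subst this
    exact lt_irrefl _ hk
  have hsumsplit : ∑ k ∈ (univ.filter (fun k => k ≤ i)).image π, R k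
      = R (π i) + ∑ k ∈ (univ.filter (fun k => k < i)).image π, R k := by
    rw [himg, Finset.sum_insert hnotmem]
  simp only [hTdef] at hA hB
  rw [← hA, ← hB, hsumsplit]
  ring
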